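/- Every backwards-bounded monounary algebra is residually finite. -/

import Mathlib

def IsMonoHom {A B : Type*} (f : A → A) (g : B → B) (φ : A → B) : Prop :=
  ∀ a, φ (f a) = g (φ a)

def ResiduallyFinite {A : Type*} (f : A → A) : Prop :=
  ∀ x y : A, x ≠ y →
    ∃ (F : Type) (g : F → F) (φ : A → F),
      Finite F ∧ IsMonoHom f g φ ∧ φ x ≠ φ y

def preim {A : Type*} (f : A → A) (n : ℕ) (a : A) : Set A := {b | f^[n] b = a}

def BackwardsBounded {A : Type*} (f : A → A) : Prop :=
  ∀ a : A, ∃ n : ℕ, preim f n a = ∅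

theorem backwards_bounded_residually_finite {A : Type*} (f : A → A)
    (h : BackwardsBounded f) : ResiduallyFinite f := by
  classical
  intro x y hxy
  obtain ⟨n, hn⟩ := h x
  have hn' : ∀ b, f^[n] b ≠ x := by
    intro b hb
    have : b ∈ preim f n x := hb
    rw [hn] at this
    exact this
  have hpos : 0 < n := by
    rcases Nat.eq_zero_or_pos n with h0 | h0
    · exact absurd (by simp [h0]) (hn' x)
    · exact h0
  have hbig : ∀ m, n ≤ m → ∀ b, f^[m] b ≠ x := by
    intro m hm b hb
    apply hn' (f^[m - n] b)
    rw [← Function.iterate_add_apply, Nat.add_sub_cancel' hm]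
    exact hb
  have huniq : ∀ a k j, f^[k] a = x → f^[j] a = x → k = j := by
    intro a k j hk hj
    by_contra hne
    wlog hkj : k < j generalizing k j
    · exact this j k hj hk (Ne.symm hne) (by omega)
    have hd : f^[j - k] x = x := by
      have hcomb : f^[j - k] (f^[k] a) = f^[j] a := by
        rw [← Function.iterate_add_apply, Nat.sub_add_cancel hkj.le]
      rw [hk] at hcomb
      rw [hcomb, hj]
    have hfix : f^[(j - k) * n] x = x := by
      rw [Function.iterate_mul]
      exact Function.iterate_fixed hd n
    exact hbig ((j - k) * n) (Nat.le_mul_of_pos_left n (by omega)) x hfix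
  set P : A → Prop := fun a => ∃ k, k < n ∧ f^[k] a = x with hP
  refine ⟨Fin (n + 1),
    fun j => if 0 < (j : ℕ) ∧ (j : ℕ) < n then ⟨(j : ℕ) - 1, by omega⟩
      else ⟨n, n.lt_succ_self⟩,
    fun a => if ha : P a then ⟨ha.choose, Nat.lt_succ_of_lt ha.choose_spec.1⟩
      else ⟨n, n.lt_succ_self⟩,
    Finite.of_fintype _, ?_, ?_⟩
  · intro a
    by_cases ha : P a
    · obtain ⟨hk, hfk⟩ := ha.choose_spec
      set k := ha.choose with hkdef
      by_cases hk0 : k = 0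
      · -- a = x, f a goes to sentinel
        have hax : a = x := by simpa [hk0] using hfk
        have hPfa : ¬ P (f a) := by
          rintro ⟨j, hj, hfj⟩
          rw [← Function.iterate_succ_apply] at hfj
          have := huniq a (j + 1) 0 hfj (by simp [hax])
          omega
        simp only [dif_pos ha, dif_neg hPfa]
        rw [if_neg (by omega)]
      · have hPfa : P (f a) := ⟨k - 1, by omega, by
          rw [← Function.iterate_succ_apply]
          have hks : (k - 1).succ = k := by omega
          rw [hks]; exact hfk⟩
        simp only [dif_pos ha, dif_pos hPfa]
        obtain ⟨hj, hfj⟩ := hPfa.choose_spec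
        have : hPfa.choose = k - 1 := by
          apply huniq (f a) _ (k - 1) hfj
          rw [← Function.iterate_succ_apply]
          have hks : (k - 1).succ = k := by omega
          rw [hks]; exact hfk
        rw [if_pos (by omega)]
        exact Fin.ext (by simp [this, hkdef])
    · have hPfa : ¬ P (f a) := by
        rintro ⟨j, hj, hfj⟩
        rw [← Function.iterate_succ_apply] at hfj
        rcases Nat.lt_or_ge (j + 1) n with hlt | hge
        · exact ha ⟨j + 1, hlt, hfj⟩
        · exact hbig (j + 1) hge a hfj
      simp only [dif_neg ha, dif_neg hPfa]
      rw [if_neg (by omega)]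
  · have hPx : P x := ⟨0, hpos, by simp⟩
    have hx0 : hPx.choose = 0 := huniq x hPx.choose 0 hPx.choose_spec.2 (by simp)
    simp only [dif_pos hPx]
    by_cases hPy : P y
    · simp only [dif_pos hPy]
      intro heq
      have hcc : hPx.choose = hPy.choose := by
        simpa using congrArg Fin.val heq
      have hy0 : hPy.choose = 0 := by omega
      have hyx := hPy.choose_spec.2
      rw [hy0] at hyx
      simp at hyx
      exact hxy hyx.symm
    · simp only [dif_neg hPy]
      intro heq
      have := congrArg Fin.val heq
      simp [hx0] at this
      omega
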